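/- arXiv:1107.1121 — 3 statements merged into one kernel-verified Lean document; each statement's English description precedes it below -/
import Mathlib

section
/- If G is a simple graph on n vertices with clique number ω(G) = ω ≥ 2, then the largest adjacency eigenvalue μ(G) satisfies μ(G)² ≤ 2·(1 − 1/ω)·e(G). -/
open SimpleGraph Finset Matrix

-- shift step for Motzkin-Straus
lemma msShift {n : ℕ} (G : SimpleGraph (Fin n)) [DecidableRel G.Adj]
    (y : Fin n → ℝ) (hy : ∀ i, 0 ≤ y i) (u v : Fin n)
    (hu : y u ≠ 0) (hv : y v ≠ 0) (hne : u ≠ v) (hnadj : ¬ G.Adj u v)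
    (hS : (G.adjMatrix ℝ *ᵥ y) v ≤ (G.adjMatrix ℝ *ᵥ y) u) :
    ∃ y' : Fin n → ℝ, (∀ i, 0 ≤ y' i) ∧ (∑ i, y' i) = (∑ i, y i) ∧
      (Finset.univ.filter fun i => y' i ≠ 0) ⊆
        ((Finset.univ.filter fun i => y i ≠ 0)).erase v ∧
      y ⬝ᵥ (G.adjMatrix ℝ *ᵥ y) ≤ y' ⬝ᵥ (G.adjMatrix ℝ *ᵥ y') := by
  classical
  set A := G.adjMatrix ℝ with hAdef
  set d : Fin n → ℝ := Pi.single u 1 - Pi.single v 1 with hd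
  set t := y v with ht
  refine ⟨y + t • d, ?_, ?_, ?_, ?_⟩
  · intro i
    by_cases hiu : i = u
    · simp only [hiu, hd, ht, Pi.add_apply, Pi.smul_apply, Pi.sub_apply, Pi.single_apply,
        smul_eq_mul]
      simp only [if_true, if_neg hne]
      nlinarith [hy u, hy v]
    · by_cases hiv : i = v
      · subst hiv
        simp [hd, Pi.single_apply, Ne.symm hne, smul_eq_mul, ht]
      · simp [hd, Pi.single_apply, hiu, hiv, smul_eq_mul]
        exact hy i
  · have h1 : ∑ i, d i = 0 := by
      simp [hd, Finset.sum_sub_distrib, Pi.single_apply]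
    simp [Finset.sum_add_distrib, ← Finset.mul_sum, h1]
  · intro i hi
    simp only [Finset.mem_filter, Finset.mem_univ, true_and] at hi
    by_cases hiv : i = v
    · exfalso; apply hi; subst hiv
      simp [hd, Pi.single_apply, Ne.symm hne, smul_eq_mul, ht]
    · rw [Finset.mem_erase]
      refine ⟨hiv, ?_⟩
      simp only [Finset.mem_filter, Finset.mem_univ, true_and]
      by_cases hiu : i = u
      · subst hiu; exact hu
      · intro h; apply hi
        simp [hd, Pi.single_apply, hiu, hiv, smul_eq_mul, h]
  · have hsymm : y ⬝ᵥ (A *ᵥ d) = d ⬝ᵥ (A *ᵥ y) := by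
      rw [Matrix.dotProduct_mulVec y A d, ← Matrix.vecMul_transpose,
        (G.isSymm_adjMatrix).eq, dotProduct_comm]
    have hdd : d ⬝ᵥ (A *ᵥ d) = 0 := by
      have h1 : ¬ G.Adj v u := fun h => hnadj h.symm
      simp [hd, sub_dotProduct, single_dotProduct, Matrix.mulVec_sub,
        Matrix.mulVec_single, hAdef, SimpleGraph.adjMatrix_apply, hnadj, h1]
    have hdy : d ⬝ᵥ (A *ᵥ y) = (A *ᵥ y) u - (A *ᵥ y) v := by
      simp [hd, sub_dotProduct, single_dotProduct]
    have expand : (y + t • d) ⬝ᵥ (A *ᵥ (y + t • d)) =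
        y ⬝ᵥ (A *ᵥ y) + t * (d ⬝ᵥ (A *ᵥ y)) + t * (y ⬝ᵥ (A *ᵥ d)) +
          t ^ 2 * (d ⬝ᵥ (A *ᵥ d)) := by
      rw [Matrix.mulVec_add, Matrix.mulVec_smul, add_dotProduct,
        dotProduct_add, dotProduct_add, smul_dotProduct,
        smul_dotProduct, dotProduct_smul, dotProduct_smul]
      simp [smul_eq_mul]; ring
    rw [expand, hsymm, hdd, hdy]
    have ht0 : 0 ≤ t := hy v
    nlinarith [hy v]

lemma msMain {n ω : ℕ} (G : SimpleGraph (Fin n)) [DecidableRel G.Adj]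
    (hω : G.cliqueNum = ω) :
    ∀ k : ℕ, ∀ y : Fin n → ℝ, (∀ i, 0 ≤ y i) → (∑ i, y i) = 1 →
      #(Finset.univ.filter fun i => y i ≠ 0) ≤ k →
      y ⬝ᵥ (G.adjMatrix ℝ *ᵥ y) ≤ 1 - 1 / (ω : ℝ) := by
  intro k
  induction k with
  | zero =>
    intro y hy hsum hcard
    exfalso
    have hz : ∀ i, y i = 0 := by
      intro i
      by_contra h
      have : i ∈ Finset.univ.filter fun i => y i ≠ 0 := by simp [h]
      have := Finset.card_pos.mpr ⟨i, this⟩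
      omega
    simp [hz] at hsum
  | succ k ih =>
    intro y hy hsum hcard
    set s := Finset.univ.filter fun i => y i ≠ 0 with hs
    by_cases hcl : ∀ u ∈ s, ∀ v ∈ s, u ≠ v → G.Adj u v
    · -- support is a clique
      have hclq : G.IsClique (s : Set (Fin n)) := by
        intro a ha b hb hab
        exact hcl a (Finset.mem_coe.mp ha) b (Finset.mem_coe.mp hb) hab
      have hcard_le : #s ≤ ω := by
        rw [← hω]; exact SimpleGraph.IsClique.card_le_cliqueNum (tc := hclq)
      have hsum_s : ∑ i ∈ s, y i = 1 := by
        rw [hs, Finset.sum_filter_ne_zero]; exact hsum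
      have hsne : s.Nonempty := by
        rcases Finset.eq_empty_or_nonempty s with h | h
        · rw [h] at hsum_s; simp at hsum_s
        · exact h
      have hcard_pos : 0 < #s := Finset.card_pos.mpr hsne
      have hCS : (1 : ℝ) ≤ #s * ∑ i ∈ s, y i ^ 2 := by
        have := sq_sum_le_card_mul_sum_sq (s := s) (f := y)
        rw [hsum_s] at this; simpa using this
      have key : y ⬝ᵥ (G.adjMatrix ℝ *ᵥ y) ≤ 1 - ∑ i ∈ s, y i ^ 2 := by
        have e1 : y ⬝ᵥ (G.adjMatrix ℝ *ᵥ y)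
            = ∑ i ∈ s, ∑ j ∈ s, y i * (G.adjMatrix ℝ i j * y j) := by
          rw [dotProduct]
          rw [← Finset.sum_subset (Finset.subset_univ s)
            (fun i _ hi => by
              have : y i = 0 := by simpa [hs] using hi
              simp [this])]
          apply Finset.sum_congr rfl
          intro i hi
          rw [Matrix.mulVec, dotProduct, Finset.mul_sum]
          exact (Finset.sum_subset (Finset.subset_univ s)
            (fun j _ hj => by
              have : y j = 0 := by simpa [hs] using hj
              simp [this])).symm
        have e2 : ∀ i ∈ s, ∀ j ∈ s, y i * (G.adjMatrix ℝ i j * y j)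
            ≤ (if i = j then 0 else y i * y j) := by
          intro i hi j hj
          by_cases hij : i = j
          · simp [hij, SimpleGraph.adjMatrix_apply]
          · simp only [if_neg hij, SimpleGraph.adjMatrix_apply]
            split_ifs with h
            · simp
            · simp only [mul_zero, zero_mul]
              exact mul_nonneg (hy i) (hy j)
        have e3 : ∑ i ∈ s, ∑ j ∈ s, (if i = j then (0:ℝ) else y i * y j)
            = 1 - ∑ i ∈ s, y i ^ 2 := by
          have : ∀ i ∈ s, ∑ j ∈ s, (if i = j then (0:ℝ) else y i * y j)
              = y i * (∑ j ∈ s, y j) - y i ^ 2 := by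
            intro i hi
            have : ∑ j ∈ s, (if i = j then (0:ℝ) else y i * y j)
                = ∑ j ∈ s, (y i * y j - if i = j then y i * y j else 0) := by
              apply Finset.sum_congr rfl
              intro j hj
              split_ifs with h <;> ring
            rw [this, Finset.sum_sub_distrib]
            simp only [Finset.sum_ite_eq]
            rw [if_pos hi, ← Finset.mul_sum, sq]
          rw [Finset.sum_congr rfl this, Finset.sum_sub_distrib, ← Finset.sum_mul, hsum_s]
          ring
        calc y ⬝ᵥ (G.adjMatrix ℝ *ᵥ y)
            = ∑ i ∈ s, ∑ j ∈ s, y i * (G.adjMatrix ℝ i j * y j) := e1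
          _ ≤ ∑ i ∈ s, ∑ j ∈ s, (if i = j then (0:ℝ) else y i * y j) := by
              apply Finset.sum_le_sum; intro i hi
              apply Finset.sum_le_sum; intro j hj
              exact e2 i hi j hj
          _ = 1 - ∑ i ∈ s, y i ^ 2 := e3
      have h1 : (1 : ℝ) / ω ≤ ∑ i ∈ s, y i ^ 2 := by
        have hω_pos : 0 < ω := lt_of_lt_of_le hcard_pos hcard_le
        have hcs : (1 : ℝ) / #s ≤ ∑ i ∈ s, y i ^ 2 := by
          rw [div_le_iff₀ (by exact_mod_cast hcard_pos)]
          calc (1:ℝ) ≤ #s * ∑ i ∈ s, y i ^ 2 := hCS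
            _ = (∑ i ∈ s, y i ^ 2) * #s := by ring
        refine le_trans ?_ hcs
        apply one_div_le_one_div_of_le
        · exact_mod_cast hcard_pos
        · exact_mod_cast hcard_le
      linarith
    · -- non-clique: shift mass
      push_neg at hcl
      obtain ⟨u, hu, v, hv, hne, hnadj⟩ := hcl
      have hyu : y u ≠ 0 := by simpa [hs] using hu
      have hyv : y v ≠ 0 := by simpa [hs] using hv
      have hvs : v ∈ s := hv
      have hus : u ∈ s := hu
      have main : ∀ w z : Fin n, y w ≠ 0 → y z ≠ 0 → w ≠ z → ¬ G.Adj w z →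
          (G.adjMatrix ℝ *ᵥ y) z ≤ (G.adjMatrix ℝ *ᵥ y) w → z ∈ s →
          y ⬝ᵥ (G.adjMatrix ℝ *ᵥ y) ≤ 1 - 1 / (ω : ℝ) := by
        intro w z hw hz hwz hnadj' hS hzs
        obtain ⟨y', hy', hsum', hsub, hQ⟩ := msShift G y hy w z hw hz hwz hnadj' hS
        refine le_trans hQ (ih y' hy' (by rw [hsum']; exact hsum) ?_)
        calc #(Finset.univ.filter fun i => y' i ≠ 0) ≤ #(s.erase z) :=
              Finset.card_le_card hsub
          _ = #s - 1 := Finset.card_erase_of_mem hzs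
          _ ≤ k := by omega
      rcases le_total ((G.adjMatrix ℝ *ᵥ y) v) ((G.adjMatrix ℝ *ᵥ y) u) with h | h
      · exact main u v hyu hyv hne hnadj h hvs
      · exact main v u hyv hyu hne.symm (fun h' => hnadj h'.symm) h hus

/-- The largest eigenvalue (spectral radius) of the adjacency matrix of a graph. -/
noncomputable def specRad {n : ℕ} (G : SimpleGraph (Fin n)) [DecidableRel G.Adj] : ℝ :=
  sSup (spectrum ℝ (G.adjMatrix ℝ))

/-- If `G` is a graph of order `n` with clique number `ω ≥ 2`, then
`μ(G)² ≤ 2 (1 - 1/ω) e(G)`. -/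
theorem statement12 (n ω : ℕ) (G : SimpleGraph (Fin n)) [DecidableRel G.Adj]
    (hω : G.cliqueNum = ω) (hω2 : 2 ≤ ω) :
    specRad G ^ 2 ≤ 2 * (1 - 1 / (ω : ℝ)) * (G.edgeFinset.card : ℝ) := by
  classical
  have hω0 : (2:ℝ) ≤ (ω:ℝ) := by exact_mod_cast hω2
  have hfac : (0:ℝ) ≤ 1 - 1 / (ω:ℝ) := by
    have : 1 / (ω:ℝ) ≤ 1 / 2 := by
      apply one_div_le_one_div_of_le <;> linarith
    linarith
  rcases Set.eq_empty_or_nonempty (spectrum ℝ (G.adjMatrix ℝ)) with hsp | hsp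
  · rw [specRad, hsp, Real.sSup_empty]
    have he : (0:ℝ) ≤ (G.edgeFinset.card : ℝ) := by positivity
    nlinarith [mul_nonneg hfac he]
  · have hA : (G.adjMatrix ℝ).IsHermitian := by
      rw [Matrix.IsHermitian]
      ext i j
      simp [Matrix.conjTranspose_apply, SimpleGraph.adjMatrix_apply, G.adj_comm]
    have hmem : specRad G ∈ spectrum ℝ (G.adjMatrix ℝ) :=
      Set.Nonempty.csSup_mem hsp (Matrix.finite_real_spectrum (𝕜 := ℝ))
    rw [Matrix.IsHermitian.spectrum_real_eq_range_eigenvalues hA] at hmem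
    obtain ⟨i, hi⟩ := hmem
    set μ := specRad G with hμ
    set x : Fin n → ℝ := ⇑(hA.eigenvectorBasis i) with hx
    have hAx : G.adjMatrix ℝ *ᵥ x = μ • x := by
      rw [hx, Matrix.IsHermitian.mulVec_eigenvectorBasis, hi]
    have hnorm : ‖hA.eigenvectorBasis i‖ = 1 := hA.eigenvectorBasis.orthonormal.1 i
    have hx2 : ∑ j, x j ^ 2 = 1 := by
      have h1 : ‖hA.eigenvectorBasis i‖ ^ 2 = ∑ j, x j ^ 2 := by
        rw [EuclideanSpace.norm_eq, Real.sq_sqrt (by positivity)]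
        apply Finset.sum_congr rfl
        intro j _
        rw [Real.norm_eq_abs, sq_abs]
      rw [← h1, hnorm, one_pow]
    have hQx : x ⬝ᵥ (G.adjMatrix ℝ *ᵥ x) = μ := by
      rw [hAx, dotProduct_smul, smul_eq_mul]
      have : x ⬝ᵥ x = 1 := by
        rw [dotProduct]
        rw [← hx2]
        apply Finset.sum_congr rfl
        intro j _
        ring
      rw [this, mul_one]
    set P := (Finset.univ ×ˢ Finset.univ).filter
      (fun p : Fin n × Fin n => G.Adj p.1 p.2) with hP
    have hform : ∀ z : Fin n → ℝ,
        z ⬝ᵥ (G.adjMatrix ℝ *ᵥ z) = ∑ p ∈ P, z p.1 * z p.2 := by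
      intro z
      rw [hP, Finset.sum_filter, Finset.sum_product]
      rw [dotProduct]
      apply Finset.sum_congr rfl
      intro a _
      rw [Matrix.mulVec, dotProduct, Finset.mul_sum]
      apply Finset.sum_congr rfl
      intro b _
      simp only [SimpleGraph.adjMatrix_apply]
      split_ifs <;> ring
    have hPcard : P.card = 2 * G.edgeFinset.card := by
      rw [← SimpleGraph.sum_degrees_eq_twice_card_edges]
      rw [hP, Finset.card_filter, Finset.sum_product]
      apply Finset.sum_congr rfl
      intro a _
      rw [SimpleGraph.degree, SimpleGraph.neighborFinset_eq_filter, Finset.card_filter]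
    have hCS := sq_sum_le_card_mul_sum_sq (s := P) (f := fun p => x p.1 * x p.2)
    have hMS : (fun j => x j ^ 2) ⬝ᵥ (G.adjMatrix ℝ *ᵥ (fun j => x j ^ 2))
        ≤ 1 - 1 / (ω : ℝ) := by
      apply msMain G hω n (fun j => x j ^ 2) (fun j => sq_nonneg _) hx2
      calc #(Finset.univ.filter fun j => x j ^ 2 ≠ 0) ≤ #(Finset.univ : Finset (Fin n)) :=
            Finset.card_filter_le _ _
        _ = n := by simp
    have hsq : ∑ p ∈ P, (x p.1 * x p.2) ^ 2
        = (fun j => x j ^ 2) ⬝ᵥ (G.adjMatrix ℝ *ᵥ (fun j => x j ^ 2)) := by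
      rw [hform (fun j => x j ^ 2)]
      apply Finset.sum_congr rfl
      intro p _
      ring
    have hμsq : μ ^ 2 ≤ (P.card : ℝ) * (1 - 1 / (ω : ℝ)) := by
      calc μ ^ 2 = (∑ p ∈ P, x p.1 * x p.2) ^ 2 := by rw [← hform x, hQx]
        _ ≤ (P.card : ℝ) * ∑ p ∈ P, (x p.1 * x p.2) ^ 2 := hCS
        _ ≤ (P.card : ℝ) * (1 - 1 / (ω : ℝ)) := by
            apply mul_le_mul_of_nonneg_left _ (by positivity)
            rw [hsq]; exact hMS
    calc specRad G ^ 2 = μ ^ 2 := by rw [hμ]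
      _ ≤ (P.card : ℝ) * (1 - 1 / (ω : ℝ)) := hμsq
      _ = 2 * (1 - 1 / (ω : ℝ)) * (G.edgeFinset.card : ℝ) := by
          rw [hPcard]; push_cast; ring
end

section
/- Let r ≥ 1 and let G be a simple graph with clique number ω(G) = ω ≥ 1 and at least one edge. Then μ(G)^r ≤ (1 − 1/ω)·w_r(G), where w_r(G) is the number of r-walks in G, i.e. the number of sequences of vertices v_1,…,v_r such that v_i is adjacent to v_{i+1} for each i = 1,…,r−1. -/
open SimpleGraph

/-- The number of `r`-walks in `G`: sequences of `r` vertices in which consecutive vertices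
are adjacent, i.e. walks on `r - 1` edges, counted over all ordered pairs of endpoints. -/
noncomputable def walkCount {n : ℕ} (G : SimpleGraph (Fin n)) [DecidableRel G.Adj]
    (r : ℕ) : ℕ :=
  ∑ u : Fin n, ∑ v : Fin n, (G.finsetWalkLength (r - 1) u v).card

section Aux

open Matrix Finset Pointwise


variable {n : ℕ} (G : SimpleGraph (Fin n)) [DecidableRel G.Adj]

lemma dot_symm (k : ℕ) (x y : Fin n → ℝ) :
    x ⬝ᵥ ((G.adjMatrix ℝ) ^ k *ᵥ y) = y ⬝ᵥ ((G.adjMatrix ℝ) ^ k *ᵥ x) := by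
  rw [Matrix.dotProduct_mulVec, ← Matrix.mulVec_transpose, Matrix.transpose_pow,
    SimpleGraph.transpose_adjMatrix, dotProduct_comm]

lemma apow_nonneg (k : ℕ) (u v : Fin n) : 0 ≤ ((G.adjMatrix ℝ) ^ k) u v := by
  induction k generalizing u v with
  | zero => simp [Matrix.one_apply]; positivity
  | succ k ih =>
    rw [pow_succ, Matrix.mul_apply]
    exact Finset.sum_nonneg fun w _ => mul_nonneg (ih u w)
      (by simp [SimpleGraph.adjMatrix_apply]; positivity)

lemma motzkin_straus {ω : ℕ} (hω1 : 1 ≤ ω)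
    (hcl : ∀ s : Finset (Fin n), G.IsClique (↑s : Set (Fin n)) → s.card ≤ ω) :
    ∀ (k : ℕ) (z : Fin n → ℝ), (∀ v, 0 ≤ z v) →
      (Finset.univ.filter fun v => z v ≠ 0).card = k →
      z ⬝ᵥ (G.adjMatrix ℝ *ᵥ z) ≤ (1 - 1/(ω:ℝ)) * (∑ v, z v)^2 := by
  intro k
  induction k using Nat.strong_induction_on with
  | _ k ih =>
  intro z hz hcard
  set A := G.adjMatrix ℝ with hAdef
  set S := Finset.univ.filter fun v => z v ≠ 0 with hSdef
  have hzero : ∀ v, v ∉ S → z v = 0 := by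
    intro v hv
    by_contra h
    exact hv (by simp [hSdef, h])
  by_cases hclq : G.IsClique (↑S : Set (Fin n))
  · -- clique case
    have hQ : z ⬝ᵥ (A *ᵥ z) = (∑ v ∈ S, z v)^2 - ∑ v ∈ S, (z v)^2 := by
      have e1 : z ⬝ᵥ (A *ᵥ z) = ∑ u, ∑ v, z u * (A u v * z v) := by
        simp [dotProduct, Matrix.mulVec, Finset.mul_sum]
      rw [e1]
      rw [← Finset.sum_subset (Finset.subset_univ S)
        (by intro u _ hu; simp [hzero u hu])]
      have e2 : ∀ u ∈ S, ∑ v, z u * (A u v * z v) = ∑ v ∈ S, z u * (A u v * z v) := by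
        intro u _
        rw [← Finset.sum_subset (Finset.subset_univ S)
          (by intro v _ hv; simp [hzero v hv])]
      rw [Finset.sum_congr rfl e2]
      have e3 : ∀ u ∈ S, ∀ v ∈ S, z u * (A u v * z v)
          = z u * z v - (if v = u then z u * z v else 0) := by
        intro u hu v hv
        rcases eq_or_ne v u with rfl | hne
        · simp [hAdef, SimpleGraph.adjMatrix_apply]
        · have hadj : G.Adj u v := hclq (by simpa [hSdef] using hu) (by simpa [hSdef] using hv) (Ne.symm hne)
          simp [hAdef, SimpleGraph.adjMatrix_apply, hadj, hne]
      have e4 : ∀ u ∈ S, ∑ v ∈ S, (if v = u then z u * z v else 0) = z u ^ 2 := by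
        intro u hu
        rw [Finset.sum_ite_eq' S u (fun v => z u * z v)]
        simp [hu, sq]
      calc ∑ u ∈ S, ∑ v ∈ S, z u * (A u v * z v)
          = ∑ u ∈ S, ((∑ v ∈ S, z u * z v) - z u ^ 2) := by
            refine Finset.sum_congr rfl fun u hu => ?_
            rw [Finset.sum_congr rfl (e3 u hu), Finset.sum_sub_distrib, e4 u hu]
        _ = (∑ v ∈ S, z v)^2 - ∑ v ∈ S, (z v)^2 := by
            rw [Finset.sum_sub_distrib, sq (∑ v ∈ S, z v), Finset.sum_mul_sum]
    have hS_sum : ∑ v, z v = ∑ v ∈ S, z v :=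
      (Finset.sum_subset (Finset.subset_univ S) (fun v _ hv => hzero v hv)).symm
    rw [hQ, hS_sum]
    have hsq : (∑ v ∈ S, z v)^2 ≤ (#S : ℝ) * ∑ v ∈ S, (z v)^2 := by
      exact_mod_cast sq_sum_le_card_mul_sum_sq (s := S) (f := fun v => z v)
    have hcard_ω : (#S : ℝ) ≤ (ω : ℝ) := by exact_mod_cast hcl S hclq
    have hsumsq : 0 ≤ ∑ v ∈ S, (z v)^2 := Finset.sum_nonneg fun v _ => sq_nonneg _
    have hωpos : (0:ℝ) < ω := by exact_mod_cast hω1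
    have h1 : (∑ v ∈ S, z v)^2 ≤ (ω:ℝ) * ∑ v ∈ S, (z v)^2 :=
      hsq.trans (mul_le_mul_of_nonneg_right hcard_ω hsumsq)
    have h2 : (1/(ω:ℝ)) * (∑ v ∈ S, z v)^2 ≤ ∑ v ∈ S, (z v)^2 := by
      rw [div_mul_eq_mul_div, div_le_iff₀ hωpos]
      linarith [h1]
    nlinarith [h2]
  · -- non-clique case: shifting
    rw [SimpleGraph.isClique_iff, Set.Pairwise] at hclq
    push_neg at hclq
    obtain ⟨u, hu, v, hv, hne, hnadj⟩ := hclq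
    have hu' : u ∈ S := hu
    have hv' : v ∈ S := hv
    clear hu hv
    have key : ∀ u v, u ∈ S → v ∈ S → u ≠ v → ¬ G.Adj u v →
        (A *ᵥ z) v ≤ (A *ᵥ z) u →
        z ⬝ᵥ (A *ᵥ z) ≤ (1 - 1/(ω:ℝ)) * (∑ w, z w)^2 := by
      intro u v hu hv hne hnadj hle
      set d : Fin n → ℝ := Pi.single u 1 - Pi.single v 1 with hd
      set z' : Fin n → ℝ := z + (z v) • d with hz'
      have hz'app : ∀ w, z' w = z w + z v * ((Pi.single u 1 : Fin n → ℝ) w - (Pi.single v 1 : Fin n → ℝ) w) := by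
        intro w; simp [hz', hd]
      have hz'u : z' u = z u + z v := by
        rw [hz'app]; simp [Pi.single_apply, hne, Ne.symm hne]
      have hz'v : z' v = 0 := by
        rw [hz'app]; simp [Pi.single_apply, hne, Ne.symm hne]
      have hz'w : ∀ w, w ≠ u → w ≠ v → z' w = z w := by
        intro w h1 h2; rw [hz'app]; simp [Pi.single_apply, h1, h2]
      have hz'nn : ∀ w, 0 ≤ z' w := by
        intro w
        rcases eq_or_ne w u with rfl | h1
        · rw [hz'u]; exact add_nonneg (hz w) (hz v)
        rcases eq_or_ne w v with rfl | h2
        · rw [hz'v]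
        · rw [hz'w w h1 h2]; exact hz w
      have hsum : ∑ w, z' w = ∑ w, z w := by
        simp only [hz', Pi.add_apply, Pi.smul_apply, hd, Pi.sub_apply, smul_eq_mul]
        rw [Finset.sum_add_distrib]
        have : ∑ w, z v * ((Pi.single u 1 : Fin n → ℝ) w - (Pi.single v 1 : Fin n → ℝ) w) = 0 := by
          rw [← Finset.mul_sum, Finset.sum_sub_distrib]
          simp [Pi.single_apply]
        rw [this, add_zero]
      have hsupp : (Finset.univ.filter fun w => z' w ≠ 0) ⊆ S.erase v := by
        intro w hw
        simp only [Finset.mem_filter, Finset.mem_univ, true_and] at hw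
        rcases eq_or_ne w v with rfl | h2
        · exact absurd hz'v hw
        rcases eq_or_ne w u with rfl | h1
        · exact Finset.mem_erase.mpr ⟨h2, hu⟩
        · refine Finset.mem_erase.mpr ⟨h2, ?_⟩
          rw [hz'w w h1 h2] at hw
          simp [hSdef, hw]
      have hcard' : (Finset.univ.filter fun w => z' w ≠ 0).card < k := by
        calc (Finset.univ.filter fun w => z' w ≠ 0).card ≤ (S.erase v).card :=
              Finset.card_le_card hsupp
          _ < S.card := Finset.card_erase_lt_of_mem hv
          _ = k := hcard
      -- Q z ≤ Q z'
      have hdAz : d ⬝ᵥ (A *ᵥ z) = (A *ᵥ z) u - (A *ᵥ z) v := by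
        simp [hd, sub_dotProduct, single_dotProduct]
      have hnadj' : ¬ G.Adj v u := fun h => hnadj (G.adj_symm h)
      have hdAd : d ⬝ᵥ (A *ᵥ d) = 0 := by
        simp [hd, sub_dotProduct, Matrix.mulVec_sub, dotProduct_sub,
          single_dotProduct, Matrix.mulVec_single, hAdef, SimpleGraph.adjMatrix_apply,
          hnadj, hnadj']
      have hzAd : z ⬝ᵥ (A *ᵥ d) = d ⬝ᵥ (A *ᵥ z) := by
        have := dot_symm G 1 z d
        simpa using this
      have hQ' : z' ⬝ᵥ (A *ᵥ z') = z ⬝ᵥ (A *ᵥ z) + 2 * z v * ((A *ᵥ z) u - (A *ᵥ z) v) := by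
        rw [hz']
        rw [Matrix.mulVec_add, add_dotProduct, dotProduct_add,
          dotProduct_add]
        rw [Matrix.mulVec_smul, smul_dotProduct, dotProduct_smul,
          dotProduct_smul, smul_dotProduct]
        simp only [smul_eq_mul]
        rw [hzAd, hdAz, hdAd]
        ring
      have hQle : z ⬝ᵥ (A *ᵥ z) ≤ z' ⬝ᵥ (A *ᵥ z') := by
        rw [hQ']
        have : 0 ≤ 2 * z v * ((A *ᵥ z) u - (A *ᵥ z) v) := by
          apply mul_nonneg (by linarith [hz v]) (by linarith)
        linarith
      calc z ⬝ᵥ (A *ᵥ z) ≤ z' ⬝ᵥ (A *ᵥ z') := hQle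
        _ ≤ (1 - 1/(ω:ℝ)) * (∑ w, z' w)^2 := ih _ hcard' z' hz'nn rfl
        _ = (1 - 1/(ω:ℝ)) * (∑ w, z w)^2 := by rw [hsum]
    rcases le_total ((A *ᵥ z) v) ((A *ᵥ z) u) with h | h
    · exact key u v hu' hv' hne hnadj h
    · exact key v u hv' hu' (Ne.symm hne) (fun hadj => hnadj (G.adj_symm hadj)) h

theorem statement13' (n r ω : ℕ) (hr : 1 ≤ r)
    (G : SimpleGraph (Fin n)) [DecidableRel G.Adj]
    (hω : G.cliqueNum = ω) (hω1 : 1 ≤ ω) (hE : G.edgeSet.Nonempty) :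
    (sSup (spectrum ℝ (G.adjMatrix ℝ))) ^ r ≤
      (1 - 1 / (ω : ℝ)) * ((∑ u : Fin n, ∑ v : Fin n,
        ((G.adjMatrix ℝ) ^ (r-1)) u v)) := by
  subst hω
  obtain ⟨a, b, hab⟩ : ∃ a b, G.Adj a b := by
    obtain ⟨e, he⟩ := hE
    revert he
    refine Sym2.ind (fun a b h => ⟨a, b, ?_⟩) e
    exact (SimpleGraph.mem_edgeSet G).mp h
  have hne_ab : a ≠ b := G.ne_of_adj hab
  set ω := G.cliqueNum with hωdef
  have h2ω : 2 ≤ ω := by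
    have hclq : G.IsClique (↑({a, b} : Finset (Fin n)) : Set (Fin n)) := by
      rw [Finset.coe_pair]
      exact SimpleGraph.isClique_pair.mpr (fun _ => hab)
    have := SimpleGraph.IsClique.card_le_cliqueNum (G := G) (tc := hclq)
    rwa [Finset.card_pair hne_ab] at this
  set γ : ℝ := 1 - 1/(ω:ℝ) with hγdef
  have hωR : (2:ℝ) ≤ (ω:ℝ) := by exact_mod_cast h2ω
  have hγpos : 0 < γ := by
    rw [hγdef]
    have : 1/(ω:ℝ) ≤ 1/2 := by
      apply one_div_le_one_div_of_le <;> linarith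
    linarith
  set A := G.adjMatrix ℝ with hAdef
  have hA : A.IsHermitian := by
    show Aᴴ = A
    ext i j
    simp [hAdef, Matrix.conjTranspose_apply, SimpleGraph.adjMatrix_apply, SimpleGraph.adj_comm]
  set μ := sSup (spectrum ℝ A) with hμdef
  have hfin : (spectrum ℝ A).Finite := Matrix.finite_spectrum A
  have hnemp : (spectrum ℝ A).Nonempty := ⟨hA.eigenvalues a, hA.eigenvalues_mem_spectrum_real a⟩
  have hmem : μ ∈ spectrum ℝ A := hnemp.csSup_mem hfin
  have hub : ∀ x ∈ spectrum ℝ A, x ≤ μ := fun x hx => le_csSup hfin.bddAbove hx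
  set E := algebraMap ℝ (Matrix (Fin n) (Fin n) ℝ) μ - A with hEdef
  have halg : algebraMap ℝ (Matrix (Fin n) (Fin n) ℝ) μ = μ • (1 : Matrix (Fin n) (Fin n) ℝ) :=
    Algebra.algebraMap_eq_smul_one μ
  have hEH : E.IsHermitian := by
    show Eᴴ = E
    rw [hEdef, halg, Matrix.conjTranspose_sub, Matrix.conjTranspose_smul,
      Matrix.conjTranspose_one, hA.eq, star_trivial]
  have hEeig : ∀ i, 0 ≤ hEH.eigenvalues i := by
    intro i
    have h1 := hEH.eigenvalues_mem_spectrum_real i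
    have h2 : spectrum ℝ E = ({μ} : Set ℝ) - spectrum ℝ A := by
      rw [hEdef, ← spectrum.singleton_sub_eq]
    rw [h2] at h1
    obtain ⟨x, hx, y, hy, hxy⟩ := Set.mem_sub.mp h1
    rw [Set.mem_singleton_iff] at hx
    subst hx
    rw [← hxy]
    have := hub y hy
    linarith
  have hPSD : E.PosSemidef := hEH.posSemidef_iff_eigenvalues_nonneg.mpr hEeig
  have hRay : ∀ x : Fin n → ℝ, x ⬝ᵥ (A *ᵥ x) ≤ μ * (x ⬝ᵥ x) := by
    intro x
    have h0 := hPSD.dotProduct_mulVec_nonneg x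
    rw [hEdef, halg, Matrix.sub_mulVec, Matrix.smul_mulVec, Matrix.one_mulVec,
      star_trivial, dotProduct_sub, dotProduct_smul] at h0
    simp only [smul_eq_mul] at h0
    linarith
  have hμ1 : (1:ℝ) ≤ μ := by
    have h := hRay (Pi.single a 1 + Pi.single b 1)
    rw [Matrix.mulVec_add, Matrix.mulVec_single, Matrix.mulVec_single] at h
    simp only [add_dotProduct, dotProduct_add, single_dotProduct,
      Pi.add_apply, Pi.single_apply, mul_one, one_mul] at h
    rw [hAdef] at h
    simp [hab, G.adj_symm hab, hne_ab, Ne.symm hne_ab, G.irrefl, if_neg] at h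
    linarith
  have hμ0 : (0:ℝ) ≤ μ := by linarith
  -- eigenvector
  have hdet : E.det = 0 := by
    have h1 : ¬ IsUnit E := by
      rw [hEdef]
      exact spectrum.mem_iff.mp hmem
    rw [Matrix.isUnit_iff_isUnit_det, isUnit_iff_ne_zero] at h1
    push_neg at h1
    exact h1
  obtain ⟨x, hx0, hxE⟩ := (Matrix.exists_mulVec_eq_zero_iff).mpr hdet
  have hxeig : A *ᵥ x = μ • x := by
    rw [hEdef, Matrix.sub_mulVec, halg, Matrix.smul_mulVec, Matrix.one_mulVec,
      sub_eq_zero] at hxE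
    exact hxE.symm
  have hpow : ∀ s : ℕ, (A^s) *ᵥ x = μ^s • x := by
    intro s
    induction s with
    | zero => simp
    | succ s ihs =>
      rw [pow_succ, ← Matrix.mulVec_mulVec, hxeig, Matrix.mulVec_smul, ihs, smul_smul,
        pow_succ, mul_comm]
  set W : ℕ → ℝ := fun s => ∑ u, ∑ v, (A^s) u v with hWdef
  have hWnn : ∀ s, 0 ≤ W s :=
    fun s => Finset.sum_nonneg fun u _ => Finset.sum_nonneg fun v _ => apow_nonneg G s u v
  have hμW : ∀ s, μ^s ≤ W s := by
    intro s
    obtain ⟨v0, -, hv0max⟩ := Finset.exists_max_image Finset.univ (fun w => |x w|) ⟨a, Finset.mem_univ a⟩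
    have hxv0 : 0 < |x v0| := by
      obtain ⟨w, hw⟩ := Function.ne_iff.mp hx0
      calc (0:ℝ) < |x w| := abs_pos.mpr hw
        _ ≤ |x v0| := hv0max w (Finset.mem_univ w)
    have key : μ^s * |x v0| ≤ W s * |x v0| := by
      calc μ^s * |x v0| = |μ^s * x v0| := by
            rw [abs_mul, abs_of_nonneg (pow_nonneg hμ0 s)]
        _ = |((A^s) *ᵥ x) v0| := by rw [hpow s]; simp
        _ = |∑ u, (A^s) v0 u * x u| := by rw [Matrix.mulVec]; rfl
        _ ≤ ∑ u, |(A^s) v0 u * x u| := Finset.abs_sum_le_sum_abs _ _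
        _ = ∑ u, (A^s) v0 u * |x u| := by
            refine Finset.sum_congr rfl fun u _ => ?_
            rw [abs_mul, abs_of_nonneg (apow_nonneg G s v0 u)]
        _ ≤ ∑ u, (A^s) v0 u * |x v0| := by
            refine Finset.sum_le_sum fun u _ => ?_
            exact mul_le_mul_of_nonneg_left (hv0max u (Finset.mem_univ u)) (apow_nonneg G s v0 u)
        _ = (∑ u, (A^s) v0 u) * |x v0| := by rw [Finset.sum_mul]
        _ ≤ W s * |x v0| := by
            refine mul_le_mul_of_nonneg_right ?_ (le_of_lt hxv0)
            exact Finset.single_le_sum (f := fun p => ∑ q, (A^s) p q)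
              (fun p _ => Finset.sum_nonneg fun q _ => apow_nonneg G s p q) (Finset.mem_univ v0)
    exact le_of_mul_le_mul_right key hxv0
  have hcl : ∀ s : Finset (Fin n), G.IsClique (↑s : Set (Fin n)) → s.card ≤ ω := by
    intro s hs
    exact SimpleGraph.IsClique.card_le_cliqueNum (G := G) (tc := hs)
  have hMS : ∀ m : ℕ, W (2*m+1) ≤ γ * (W m)^2 := by
    intro m
    set z : Fin n → ℝ := (A^m) *ᵥ (fun _ => 1) with hzdef
    have hznn : ∀ v, 0 ≤ z v := by
      intro v
      show 0 ≤ ∑ u, (A^m) v u * 1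
      exact Finset.sum_nonneg fun u _ => by
        simpa using mul_nonneg (apow_nonneg G m v u) zero_le_one
    have hzsum : ∑ v, z v = W m := by
      rw [hWdef]
      simp only [hzdef]
      refine Finset.sum_congr rfl fun v _ => ?_
      simp [Matrix.mulVec, dotProduct]
    have hQ : z ⬝ᵥ (A *ᵥ z) = W (2*m+1) := by
      have e1 : A *ᵥ z = (A^(m+1)) *ᵥ (fun _ => 1) := by
        rw [hzdef, Matrix.mulVec_mulVec, ← pow_succ']
      rw [e1, hzdef]
      rw [dot_symm G (m+1) ((A^m) *ᵥ (fun _ => 1)) (fun _ => 1)]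
      rw [Matrix.mulVec_mulVec, ← pow_add]
      have : m + 1 + m = 2*m+1 := by ring
      rw [this]
      rw [hWdef]
      simp [dotProduct, Matrix.mulVec]
      rfl
    have := motzkin_straus G (le_trans one_le_two h2ω) hcl
      ((Finset.univ.filter fun v => z v ≠ 0).card) z hznn rfl
    rw [hQ, hzsum] at this
    exact this
  -- iterate
  set s := r - 1 with hsdef
  have hrs : r = s + 1 := (Nat.succ_pred_eq_of_pos hr).symm
  have hNsucc : ∀ k : ℕ, 2^(k+1) * (s+1) - 1 = 2 * (2^k * (s+1) - 1) + 1 := by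
    intro k
    have h1 : 1 ≤ 2^k * (s+1) := Nat.one_le_iff_ne_zero.mpr (by positivity)
    have h2 : (2:ℕ)^(k+1) * (s+1) = 2 * (2^k * (s+1)) := by rw [pow_succ]; ring
    omega
  have hiter : ∀ k : ℕ, W (2^k * (s+1) - 1) ≤ γ^(2^k - 1) * (W s)^(2^k) := by
    intro k
    induction k with
    | zero => simp
    | succ k ihk =>
      have h2k : 1 ≤ 2^k := Nat.one_le_two_pow
      have h2k1 : 2 ≤ 2^(k+1) := by
        have : (2:ℕ)^1 ≤ 2^(k+1) := Nat.pow_le_pow_right (by norm_num) (by omega)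
        simpa using this
      calc W (2^(k+1) * (s+1) - 1) = W (2 * (2^k * (s+1) - 1) + 1) := by rw [hNsucc k]
        _ ≤ γ * (W (2^k * (s+1) - 1))^2 := hMS _
        _ ≤ γ * (γ^(2^k - 1) * (W s)^(2^k))^2 := by
            apply mul_le_mul_of_nonneg_left _ (le_of_lt hγpos)
            apply pow_le_pow_left₀ (hWnn _) ihk
        _ = γ^(2^(k+1) - 1) * (W s)^(2^(k+1)) := by
            have e1 : 2^k*2 = 2^(k+1) := (pow_succ 2 k).symm
            have e2 : (2^k-1)*2 + 1 = 2^(k+1) - 1 := by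
              have h3 : (2:ℕ)^(k+1) = 2^k * 2 := pow_succ 2 k
              omega
            rw [mul_pow, ← pow_mul, ← pow_mul, ← mul_assoc, ← pow_succ', e2, e1]
  have hWspos : 0 < W s := lt_of_lt_of_le one_pos (le_trans (one_le_pow₀ hμ1) (hμW s))
  have hkey : ∀ k : ℕ, (μ^(s+1))^(2^k) ≤ (μ/γ) * (γ * W s)^(2^k) := by
    intro k
    have h1 : μ^(2^k * (s+1) - 1) ≤ γ^(2^k - 1) * (W s)^(2^k) := le_trans (hμW _) (hiter k)
    have h2k : 1 ≤ 2^k := Nat.one_le_two_pow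
    have hpos1 : 1 ≤ 2^k * (s+1) := Nat.one_le_iff_ne_zero.mpr (by positivity)
    have e3 : (μ^(s+1))^(2^k) = μ^(2^k * (s+1) - 1) * μ := by
      conv_lhs => rw [← pow_mul, mul_comm (s+1) (2^k),
        show 2^k * (s+1) = (2^k * (s+1) - 1) + 1 from by omega, pow_succ]
    calc (μ^(s+1))^(2^k) = μ^(2^k*(s+1)-1) * μ := e3
      _ ≤ (γ^(2^k-1) * (W s)^(2^k)) * μ := mul_le_mul_of_nonneg_right h1 hμ0
      _ = (μ/γ) * (γ * W s)^(2^k) := by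
          rw [mul_pow]
          have e4 : γ^(2^k) = γ * γ^(2^k - 1) := by
            rw [← pow_succ', show 2^k - 1 + 1 = 2^k by omega]
          rw [e4]
          field_simp
  have hfinal : μ^(s+1) ≤ γ * W s := by
    by_contra hcon
    push_neg at hcon
    have hbq : 0 < γ * W s := mul_pos hγpos hWspos
    have hq1 : 1 < μ^(s+1) / (γ * W s) := (one_lt_div hbq).mpr hcon
    obtain ⟨k, hk⟩ := pow_unbounded_of_one_lt (μ/γ) hq1
    have h2 : (μ^(s+1)/(γ*W s))^k ≤ (μ^(s+1)/(γ*W s))^(2^k) :=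
      pow_le_pow_right₀ (le_of_lt hq1) (Nat.le_of_lt (Nat.lt_two_pow_self (n := k)))
    have h3 : (μ^(s+1)/(γ*W s))^(2^k) ≤ μ/γ := by
      rw [div_pow, div_le_iff₀ (pow_pos hbq _)]
      calc (μ^(s+1))^(2^k) ≤ (μ/γ) * (γ * W s)^(2^k) := hkey k
        _ = μ/γ * (γ*W s)^(2^k) := rfl
    linarith
  rw [hrs]
  exact hfinal


end Aux

/-- Let `r ≥ 1` and let `G` be a graph with clique number `ω ≥ 1` and at least one edge.
Then `μ(G)^r ≤ (1 - 1/ω) w_r(G)`, where `w_r(G)` is the number of `r`-walks in `G`. -/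
theorem statement13 (n r ω : ℕ) (hr : 1 ≤ r)
    (G : SimpleGraph (Fin n)) [DecidableRel G.Adj]
    (hω : G.cliqueNum = ω) (hω1 : 1 ≤ ω) (hE : G.edgeSet.Nonempty) :
    specRad G ^ r ≤ (1 - 1 / (ω : ℝ)) * (walkCount G r : ℝ) := by
  have h := statement13' n r ω hr G hω hω1 hE
  have hcast : ((walkCount G r : ℕ) : ℝ)
      = ∑ u : Fin n, ∑ v : Fin n, ((G.adjMatrix ℝ) ^ (r-1)) u v := by
    rw [walkCount]
    push_cast
    refine Finset.sum_congr rfl fun u _ => Finset.sum_congr rfl fun v _ => ?_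
    rw [SimpleGraph.adjMatrix_pow_apply_eq_card_walk, SimpleGraph.card_set_walk_length_eq]
  rw [hcast]
  exact h
end

section
/- If G is a simple graph on n ≥ 1 vertices with independence number α(G) = α, then the largest adjacency eigenvalue satisfies μ(G) ≥ ⌈n/α⌉ − 1. -/
open SimpleGraph

/-- The independence number of a graph: the largest size of a set of pairwise non-adjacent
vertices. -/
noncomputable def indepNum {V : Type*} [Fintype V] (G : SimpleGraph V) : ℕ :=
  sSup {m | ∃ s : Finset V, s.card = m ∧ ∀ a ∈ s, ∀ b ∈ s, a ≠ b → ¬G.Adj a b}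

/-- Greedy extraction of an independent set: if every nonempty subset of `S` contains
a vertex of internal degree at most `d - 1`, then `S` contains an independent set of
size at least `S.card / d`. -/
lemma indep_extract {V : Type*} [Fintype V] [DecidableEq V] (G : SimpleGraph V)
    [DecidableRel G.Adj] (d : ℕ) :
    ∀ (S : Finset V),
      (∀ T ⊆ S, T.Nonempty → ∃ v ∈ T, (T.filter (G.Adj v)).card + 1 ≤ d) →
      ∃ I : Finset V, I ⊆ S ∧ (∀ a ∈ I, ∀ b ∈ I, a ≠ b → ¬G.Adj a b) ∧
        S.card ≤ d * I.card := by
  intro S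
  induction S using Finset.strongInduction with
  | _ S ih =>
    intro h
    rcases S.eq_empty_or_nonempty with rfl | hS
    · exact ⟨∅, Finset.Subset.refl _, by simp, by simp⟩
    · obtain ⟨v, hvS, hvdeg⟩ := h S (Finset.Subset.refl _) hS
      set N : Finset V := insert v (S.filter (G.Adj v)) with hN
      have hNcard : N.card ≤ d := le_trans (Finset.card_insert_le _ _) hvdeg
      set S' : Finset V := S \ N with hS'
      have hS'S : S' ⊂ S := by
        apply Finset.sdiff_ssubset (by simp [hN, hvS, Finset.insert_subset_iff,
          Finset.filter_subset]) (by simp [hN])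
      obtain ⟨I', hI'S, hI'ind, hI'card⟩ := ih S' hS'S
        (fun T hT hTne => h T (hT.trans (Finset.sdiff_subset)) hTne)
      refine ⟨insert v I', ?_, ?_, ?_⟩
      · refine Finset.insert_subset hvS (hI'S.trans Finset.sdiff_subset)
      · intro a ha b hb hab
        have key : ∀ w ∈ I', ¬ G.Adj v w := by
          intro w hw hadj
          have hwS' : w ∈ S' := hI'S hw
          have : w ∈ N := by
            simp [hN, Finset.mem_insert, Finset.mem_filter]
            right
            exact ⟨(Finset.mem_sdiff.mp hwS').1, hadj⟩
          exact (Finset.mem_sdiff.mp hwS').2 this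
        rcases Finset.mem_insert.mp ha with rfl | ha' <;>
          rcases Finset.mem_insert.mp hb with rfl | hb'
        · exact absurd rfl hab
        · exact key b hb'
        · exact fun hadj => key a ha' (hadj.symm)
        · exact hI'ind a ha' b hb' hab
      · have hvI' : v ∉ I' := fun hv => (Finset.mem_sdiff.mp (hI'S hv)).2 (by simp [hN])
        rw [Finset.card_insert_of_notMem hvI', Nat.mul_add, mul_one]
        have h1 : S.card ≤ S'.card + N.card := by
          have h2 := Finset.card_sdiff_add_card S N
          have hf : S'.card = (S \ N).card := by rw [hS']
          have h3 : S.card ≤ (S ∪ N).card := Finset.card_le_card Finset.subset_union_left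
          omega
        omega

open Matrix in
/-- Rayleigh quotient bound: for a real symmetric matrix, `xᵀAx ≤ sSup (spectrum) * xᵀx`. -/
lemma rayleigh_le_sSup {m : ℕ} (A : Matrix (Fin m) (Fin m) ℝ)
    (hA : A.IsHermitian) (x : Fin m → ℝ) :
    x ⬝ᵥ (A *ᵥ x) ≤ sSup (spectrum ℝ A) * (x ⬝ᵥ x) := by
  set μ := sSup (spectrum ℝ A) with hμ
  have hbdd : BddAbove (spectrum ℝ A) :=
    (Matrix.finite_real_spectrum (A := A)).bddAbove
  have heig : ∀ i, hA.eigenvalues i ≤ μ := fun i =>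
    le_csSup hbdd (hA.eigenvalues_mem_spectrum_real i)
  set U : Matrix (Fin m) (Fin m) ℝ := (hA.eigenvectorUnitary : Matrix (Fin m) (Fin m) ℝ)
    with hU
  have hU1 : U * star U = 1 := Matrix.mem_unitaryGroup_iff.mp hA.eigenvectorUnitary.2
  have hst : star U = Uᵀ := by
    ext i j; simp [Matrix.star_apply]
  set y : Fin m → ℝ := star U *ᵥ x with hy
  have hxy : U *ᵥ y = x := by
    rw [hy, mulVec_mulVec, hU1, one_mulVec]
  have hdiag : A = U * diagonal hA.eigenvalues * star U := by
    have := hA.spectral_theorem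
    simpa using this
  have h1 : A *ᵥ x = U *ᵥ (diagonal hA.eigenvalues *ᵥ y) := by
    conv_lhs => rw [hdiag]
    rw [← mulVec_mulVec, ← mulVec_mulVec, ← hy]
  have hvm : x ᵥ* U = y := by
    ext i
    simp [Matrix.vecMul, Matrix.mulVec, dotProduct, hy, Matrix.star_apply, mul_comm]
  have key : x ⬝ᵥ (A *ᵥ x) = ∑ i, hA.eigenvalues i * (y i)^2 := by
    rw [h1, dotProduct_mulVec, hvm]
    simp only [dotProduct, mulVec_diagonal]
    exact Finset.sum_congr rfl fun i _ => by ring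
  have hyy : y ⬝ᵥ y = x ⬝ᵥ x := by
    nth_rewrite 2 [hy]
    rw [dotProduct_mulVec, hst, vecMul_transpose, hxy]
  have hsum : ∑ i, hA.eigenvalues i * (y i)^2 ≤ μ * (y ⬝ᵥ y) := by
    rw [dotProduct, Finset.mul_sum]
    apply Finset.sum_le_sum
    intro i _
    have h2 : (y i) * (y i) = (y i)^2 := by ring
    rw [h2]
    exact mul_le_mul_of_nonneg_right (heig i) (sq_nonneg _)
  rw [key, ← hyy]
  exact hsum

open Matrix in
/-- If `G` is a graph on `n ≥ 1` vertices with independence number `α`, then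
`μ(G) ≥ ⌈n/α⌉ - 1`. -/
theorem statement15 (n α : ℕ) (hn : 1 ≤ n)
    (G : SimpleGraph (Fin n)) [DecidableRel G.Adj]
    (hα : _root_.indepNum G = α) :
    ((⌈(n : ℝ) / (α : ℝ)⌉ : ℤ) : ℝ) - 1 ≤ specRad G := by
  classical
  have hbdd : BddAbove {m | ∃ s : Finset (Fin n), s.card = m ∧
      ∀ a ∈ s, ∀ b ∈ s, a ≠ b → ¬G.Adj a b} := by
    refine ⟨n, fun m hm => ?_⟩
    obtain ⟨s, hs, _⟩ := hm
    simpa [hs] using (Finset.card_le_univ s).trans_eq (by simp)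
  have hindep_le : ∀ s : Finset (Fin n), (∀ a ∈ s, ∀ b ∈ s, a ≠ b → ¬G.Adj a b) →
      s.card ≤ α := by
    intro s hs
    rw [← hα]
    exact le_csSup hbdd ⟨s, rfl, hs⟩
  have hα1 : 1 ≤ α := by
    rw [← hα]
    refine le_csSup hbdd ⟨{⟨0, hn⟩}, by simp, ?_⟩
    intro a ha b hb hab
    simp only [Finset.mem_singleton] at ha hb
    exact absurd (ha.trans hb.symm) hab
  set c : ℤ := ⌈(n : ℝ) / (α : ℝ)⌉ with hc
  have hc1 : 1 ≤ c := by
    have : (0 : ℝ) < (n : ℝ) / (α : ℝ) := by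
      apply div_pos <;> [exact_mod_cast hn; exact_mod_cast hα1]
    exact Int.ceil_pos.mpr this
  set k : ℕ := c.toNat with hk
  have hkc : (k : ℤ) = c := Int.toNat_of_nonneg (by omega)
  have hk1 : 1 ≤ k := by omega
  -- find a nonempty subset with min internal degree ≥ k - 1
  have hT : ∃ T : Finset (Fin n), T.Nonempty ∧
      ∀ v ∈ T, k - 1 ≤ (T.filter (G.Adj v)).card := by
    by_contra hcon
    push_neg at hcon
    obtain ⟨I, _, hind, hcard⟩ := indep_extract G (k - 1) Finset.univ
      (fun T _ hTne => by
        obtain ⟨v, hv, hlt⟩ := hcon T hTne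
        exact ⟨v, hv, by omega⟩)
    have h1 : n ≤ (k - 1) * I.card := by simpa using hcard
    have h3 : n ≤ (k - 1) * α := le_trans h1 (Nat.mul_le_mul_left _ (hindep_le I hind))
    have h4 : (n : ℝ) / (α : ℝ) ≤ ((k - 1 : ℕ) : ℝ) := by
      rw [div_le_iff₀ (by exact_mod_cast hα1)]
      exact_mod_cast h3
    have h5 : c ≤ ((k - 1 : ℕ) : ℤ) := Int.ceil_le.mpr (by exact_mod_cast h4)
    omega
  obtain ⟨T, hTne, hTdeg⟩ := hT
  set A := G.adjMatrix ℝ with hAdef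
  have hA : A.IsHermitian := by
    rw [hAdef, Matrix.IsHermitian]
    ext i j
    simp [Matrix.conjTranspose_apply, SimpleGraph.adjMatrix_apply, G.adj_comm i j]
  set x : Fin n → ℝ := fun v => if v ∈ T then 1 else 0 with hx
  have hxx : x ⬝ᵥ x = (T.card : ℝ) := by
    simp [dotProduct, hx, ite_and, Finset.sum_ite_mem, Finset.univ_inter]
  have hexp : x ⬝ᵥ (A *ᵥ x) = ∑ v ∈ T, ((T.filter (G.Adj v)).card : ℝ) := by
    simp only [dotProduct, Matrix.mulVec, hx, hAdef, SimpleGraph.adjMatrix_apply,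
      ite_mul, mul_ite, mul_one, mul_zero, one_mul, zero_mul, Finset.sum_ite_mem,
      Finset.univ_inter, Finset.sum_ite_eq]
    refine Finset.sum_congr rfl fun v _ => ?_
    rw [Finset.sum_ite, Finset.sum_const_zero, add_zero, Finset.sum_const, nsmul_eq_mul, mul_one]
  have hAx : (T.card : ℝ) * ((k - 1 : ℕ) : ℝ) ≤ x ⬝ᵥ (A *ᵥ x) := by
    rw [hexp]
    calc (T.card : ℝ) * ((k - 1 : ℕ) : ℝ)
        = ∑ _v ∈ T, ((k - 1 : ℕ) : ℝ) := by rw [Finset.sum_const, nsmul_eq_mul]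
      _ ≤ ∑ v ∈ T, ((T.filter (G.Adj v)).card : ℝ) :=
          Finset.sum_le_sum fun v hv => by exact_mod_cast hTdeg v hv
  have hray := rayleigh_le_sSup A hA x
  rw [hxx] at hray
  have hTpos : (0 : ℝ) < (T.card : ℝ) := by exact_mod_cast hTne.card_pos
  have hfin : ((k - 1 : ℕ) : ℝ) ≤ specRad G := by
    have := le_trans hAx hray
    rw [specRad, ← hAdef]
    nlinarith
  have hcast : ((c : ℤ) : ℝ) = (k : ℝ) := by exact_mod_cast congrArg (Int.cast : ℤ → ℝ) hkc.symm
  rw [hcast]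
  have : ((k - 1 : ℕ) : ℝ) = (k : ℝ) - 1 := by
    push_cast [Nat.cast_sub hk1]
    ring
  linarith [this ▸ hfin]
end
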